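/- If v ∈ P_q and w·v is a prefix of q, then w is a power of q_0, the shortest element of P_q. -/
import Mathlib


/-- `u ^ n` for lists: concatenation of `n` copies of `u`. -/
def listPow {X : Type*} (u : List X) : ℕ → List X
  | 0 => []
  | n+1 => u ++ listPow u n

/-- `P_q = { v : e ⊏ v ⊑ q ⊏ v·q }`. -/
def Pq {X : Type*} (q : List X) : Set (List X) :=
  {v | v ≠ [] ∧ v <+: q ∧ q <+: v ++ q}

/-- membership in the submonoid `P^*` generated by `P`. -/
def InStar {X : Type*} (P : Set (List X)) (w : List X) : Prop :=
  ∃ l : List (List X), (∀ v ∈ l, v ∈ P) ∧ w = l.flatten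

/-- A finite word `w` is quasiperiodic with quasiperiod `q`. -/
def QuasiPeriodic {X : Type*} (q w : List X) : Prop :=
  ∀ j < w.length, ∃ u : List X, u.length ≤ j ∧ j < u.length + q.length ∧ (u ++ q) <+: w

/-- `Q_q`: the set of finite words quasiperiodic with quasiperiod `q`. -/
def Qq {X : Type*} (q : List X) : Set (List X) := {w | QuasiPeriodic q w}

/-- `u` is a (finite) prefix of the infinite word `ξ`. -/
def InfPrefix {X : Type*} (ξ : ℕ → X) (u : List X) : Prop :=
  u = (List.range u.length).map ξ

/-- An infinite word `ξ` is quasiperiodic with quasiperiod `q`. -/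
def QuasiPeriodicInf {X : Type*} (q : List X) (ξ : ℕ → X) : Prop :=
  ∀ j : ℕ, ∃ u : List X, u.length ≤ j ∧ j < u.length + q.length ∧ InfPrefix ξ (u ++ q)

/-- the star root `P \ (P²·P*)`. -/
def StarRoot {X : Type*} (P : Set (List X)) : Set (List X) :=
  {v | v ∈ P ∧ ¬ ∃ (a b : List X) (l : List (List X)),
    a ∈ P ∧ b ∈ P ∧ (∀ x ∈ l, x ∈ P) ∧ v = a ++ b ++ l.flatten}

/-- `ξ ∈ P^ω`: infinite concatenation of nonempty words of `P`. -/
def InOmega {X : Type*} (P : Set (List X)) (ξ : ℕ → X) : Prop :=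
  ∃ f : ℕ → List X, (∀ i, f i ∈ P ∧ f i ≠ []) ∧
    ∀ n, InfPrefix ξ ((List.range n).map f).flatten

/-- elementwise periodicity from `q <+: v ++ q`. -/
lemma per_getElem {X : Type*} {q v : List X} (h1 : q <+: v ++ q)
    {i : ℕ} (h2 : v.length ≤ i) (h3 : i < q.length) :
    q[i] = q[i - v.length]'(by omega) := by
  obtain ⟨t, ht⟩ := h1
  have e : (q ++ t)[i]'(by simp; omega) = (v ++ q)[i]'(by simp; omega) := by
    simp only [ht]
  rwa [List.getElem_append_left h3, List.getElem_append_right h2] at e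

lemma pref_of_per {X : Type*} {q v : List X} (h1 : q <+: v ++ q)
    (h2 : v.length ≤ q.length) : v <+: q :=
  List.prefix_of_prefix_length_le (List.prefix_append v q) h1 h2

lemma key {X : Type*} {q v w r : List X} (hv : v ≠ []) (h1 : q <+: v ++ q)
    (h2 : q = w ++ v ++ r) : q <+: w ++ q := by
  subst h2
  have hvlen : 0 < v.length := List.length_pos_iff.mpr hv
  set q : List X := w ++ v ++ r with hq
  have hql : q.length = w.length + v.length + r.length := by simp [hq, Nat.add_assoc]
  have hvq : v <+: q := pref_of_per h1 (by omega)
  have claim : ∀ i, w.length ≤ i → ∀ h3 : i < q.length,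
      q[i] = q[i - w.length]'(by omega) := by
    intro i
    induction i using Nat.strong_induction_on with
    | _ i ih =>
      intro hwi h3
      rcases lt_or_ge i (w.length + v.length) with hcase | hcase
      · -- direct window: both sides are an entry of v
        have hv1 : q[i] = v[i - w.length]'(by omega) := by
          show ((w ++ v) ++ r)[i]'_ = _
          rw [List.getElem_append_left (by simp; omega),
            List.getElem_append_right (by simpa using hwi)]
        have hv2 : q[i - w.length]'(by omega) = v[i - w.length]'(by omega) := by
          obtain ⟨s, hs⟩ := hvq
          have e : (v ++ s)[i - w.length]'(by rw [hs]; omega)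
              = v[i - w.length]'(by omega) :=
            List.getElem_append_left (by omega)
          rw [← e]
          congr 1
          exact hs.symm
        rw [hv1, hv2]
      · -- use the period |v| on both sides plus the induction hypothesis
        have e1 : q[i] = q[i - v.length]'(by omega) := per_getElem h1 (by omega) h3
        have e2 : q[i - v.length]'(by omega)
            = q[i - v.length - w.length]'(by omega) :=
          ih (i - v.length) (by omega) (by omega) (by omega)
        have e3 : q[i - w.length]'(by omega)
            = q[i - w.length - v.length]'(by omega) :=
          per_getElem h1 (by omega) (by omega)
        rw [e1, e2, e3]
        congr 1
        omega
  rw [List.prefix_iff_eq_take]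
  apply List.ext_getElem (by simp)
  intro i hi1 hi2
  have hi : i < q.length := by simpa using hi1
  rw [List.getElem_take]
  rcases lt_or_ge i w.length with hcase | hcase
  · rw [List.getElem_append_left (by omega : i < w.length)]
    show ((w ++ v) ++ r)[i]'_ = _
    rw [List.getElem_append_left (show i < (w ++ v).length by simp; omega),
      List.getElem_append_left (show i < w.length by omega)]
  · rw [List.getElem_append_right hcase]
    exact claim i hcase hi

lemma stmt11_aux {X : Type*} (q : List X) (q0 : List X)
    (h0 : q0 ∈ Pq q) (hmin : ∀ v ∈ Pq q, q0.length ≤ v.length)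
    (v : List X) (hv : v ∈ Pq q) :
    ∀ n : ℕ, ∀ w : List X, w.length ≤ n → w ++ v <+: q → ∃ m : ℕ, w = listPow q0 m := by
  obtain ⟨hq0ne, hq0p, hq0per⟩ := h0
  obtain ⟨hvne, hvp, hvper⟩ := hv
  intro n
  induction n with
  | zero =>
    intro w hlen _
    have : w = [] := List.eq_nil_of_length_eq_zero (by omega)
    exact ⟨0, by simp [this, listPow]⟩
  | succ n ih =>
    intro w hlen hwv
    rcases eq_or_ne w [] with rfl | hw
    · exact ⟨0, by simp [listPow]⟩
    · have hwq : w <+: q := (List.prefix_append w v).trans hwv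
      obtain ⟨r, hr⟩ := hwv
      have hkey : q <+: w ++ q := key hvne hvper (by rw [← hr, List.append_assoc])
      have hwPq : w ∈ Pq q := ⟨hw, hwq, hkey⟩
      have hlen0 : q0.length ≤ w.length := hmin w hwPq
      obtain ⟨w', rfl⟩ := List.prefix_of_prefix_length_le hq0p hwq hlen0
      have hw'v : w' ++ v <+: q := by
        have h1 : q0 ++ (w' ++ v) <+: q0 ++ q := by
          refine List.IsPrefix.trans ?_ hq0per
          exact ⟨r, by rw [← hr]; simp⟩
        exact (List.prefix_append_right_inj q0).mp h1
      have hq0l : 0 < q0.length := List.length_pos_iff.mpr hq0ne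
      obtain ⟨m, hm⟩ := ih w' (by simp at hlen; omega) hw'v
      exact ⟨m + 1, by rw [listPow, ← hm]⟩

/-- If `v ∈ P_q` and `w·v ⊑ q` then `w ∈ {q₀}^*`. -/
theorem stmt11 {X : Type*} (q : List X) (hq : q ≠ []) (q0 : List X)
    (h0 : q0 ∈ Pq q) (hmin : ∀ v ∈ Pq q, q0.length ≤ v.length)
    (v w : List X) (hv : v ∈ Pq q) (hwv : w ++ v <+: q) :
    ∃ m : ℕ, w = listPow q0 m :=
  stmt11_aux q q0 h0 hmin v hv w.length w le_rfl hwv
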